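/- Let φ^0, φ^1, …, φ^N be a sequence in a real inner product space H. Then for every 1 ≤ n ≤ N, ⟨Δ_τ^{ν(t_n)} φ^n, φ^n⟩ ≥ (1/(2τ)) [ b^{(ν)}_{n,n} ‖φ^n‖² − ∑_{k=1}^{n−1} (b^{(ν)}_{n,k+1} − b^{(ν)}_{n,k}) ‖φ^k‖² − b^{(ν)}_{n,1} ‖φ^0‖² ]. -/

import Mathlib

open Finset
open scoped RealInnerProductSpace

private lemma abel_scalar (b c : ℕ → ℝ) :
    ∀ n, 1 ≤ n →
      ∑ k ∈ Finset.Icc 1 n, b k * (c k - c (k - 1))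
        = b n * c n - b 1 * c 0
          - ∑ k ∈ Finset.Icc 1 (n - 1), (b (k + 1) - b k) * c k := by
  intro n hn
  induction n with
  | zero => omega
  | succ m ih =>
    rcases Nat.lt_or_ge 1 (m + 1) with h | h
    · have hm : 1 ≤ m := by omega
      rw [Finset.sum_Icc_succ_top (by omega : 1 ≤ m + 1), ih hm]
      have h1 : m + 1 - 1 = m := rfl
      have h2 : m = (m - 1) + 1 := by omega
      rw [h1, h2, Finset.sum_Icc_succ_top (by omega : 1 ≤ m - 1 + 1), ← h2]
      ring
    · have : m = 0 := by omega
      subst this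
      simp
      ring

/-- For every 1 ≤ n ≤ N,
`⟨Δ_τ^{ν(t_n)} φ^n, φ^n⟩ ≥ (1/(2τ)) [ b_{n,n} ‖φ^n‖² - ∑_{k=1}^{n-1} (b_{n,k+1} - b_{n,k}) ‖φ^k‖² - b_{n,1} ‖φ^0‖² ]`. -/
theorem discrete_caputo_lower_bound
    {H : Type*} [NormedAddCommGroup H] [InnerProductSpace ℝ H]
    (T : ℝ) (hT : 0 < T) (N : ℕ) (hN : 0 < N)
    (τ : ℝ) (hτ : τ = T / N)
    (t : ℕ → ℝ) (ht : ∀ k, t k = k * τ)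
    (ν : ℝ → ℝ) (hν : ∀ s ∈ Set.Icc (0 : ℝ) T, 0 < ν s ∧ ν s < 1)
    (b : ℕ → ℕ → ℝ)
    (hb : ∀ n k, 1 ≤ k → k ≤ n → n ≤ N →
      b n k = (1 / Real.Gamma (2 - ν (t n))) *
        ((t n - t (k - 1)) ^ (1 - ν (t n)) - (t n - t k) ^ (1 - ν (t n))))
    (φ : ℕ → H)
    (n : ℕ) (hn1 : 1 ≤ n) (hnN : n ≤ N) :
    ⟪(1 / τ) • ∑ k ∈ Finset.Icc 1 n, b n k • (φ k - φ (k - 1)), φ n⟫ ≥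
      (1 / (2 * τ)) * (b n n * ‖φ n‖ ^ 2
        - ∑ k ∈ Finset.Icc 1 (n - 1), (b n (k + 1) - b n k) * ‖φ k‖ ^ 2
        - b n 1 * ‖φ 0‖ ^ 2) := by
  have hNpos : (0:ℝ) < N := by exact_mod_cast hN
  have hτpos : 0 < τ := by rw [hτ]; positivity
  have htn_mem : t n ∈ Set.Icc (0:ℝ) T := by
    constructor
    · rw [ht]; positivity
    · rw [ht, hτ]
      have hcast : (n:ℝ) ≤ N := by exact_mod_cast hnN
      calc (n:ℝ) * (T / N) ≤ N * (T / N) := by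
            apply mul_le_mul_of_nonneg_right hcast; positivity
        _ = T := by field_simp
  obtain ⟨hν0, hν1⟩ := hν (t n) htn_mem
  set γ : ℝ := 1 - ν (t n) with hγdef
  have hγ0 : 0 < γ := by simp [hγdef]; linarith
  have hγ1 : γ < 1 := by simp [hγdef]; linarith
  have hΓ : 0 < Real.Gamma (2 - ν (t n)) := Real.Gamma_pos_of_pos (by linarith)
  set C : ℝ := 1 / Real.Gamma (2 - ν (t n)) with hCdef
  have hC : 0 ≤ C := by positivity
  -- explicit formula
  have hbf : ∀ k, 1 ≤ k → k ≤ n →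
      b n k = C * ((((n:ℝ) - k + 1) * τ) ^ γ - (((n:ℝ) - k) * τ) ^ γ) := by
    intro k hk1 hk2
    rw [hb n k hk1 hk2 hnN]
    have e1 : t n - t (k - 1) = ((n:ℝ) - k + 1) * τ := by
      rw [ht, ht, Nat.cast_sub hk1]; push_cast; ring
    have e2 : t n - t k = ((n:ℝ) - k) * τ := by rw [ht, ht]; ring
    rw [e1, e2]
  -- monotonicity of coefficients
  have hmono : ∀ k, 1 ≤ k → k + 1 ≤ n → b n k ≤ b n (k + 1) := by
    intro k hk1 hk2
    rw [hbf k hk1 (by omega), hbf (k + 1) (by omega) hk2]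
    have hx0 : (0:ℝ) ≤ ((n:ℝ) - k - 1) * τ := by
      have : (k:ℝ) + 1 ≤ n := by exact_mod_cast hk2
      nlinarith
    have key : (((n:ℝ) - k + 1) * τ) ^ γ + (((n:ℝ) - k - 1) * τ) ^ γ
        ≤ 2 * (((n:ℝ) - k) * τ) ^ γ := by
      have hconc := (Real.concaveOn_rpow hγ0.le hγ1.le).2
        (Set.mem_Ici.mpr hx0)
        (Set.mem_Ici.mpr (le_trans hx0 (by nlinarith)) :
          ((n:ℝ) - k + 1) * τ ∈ Set.Ici (0:ℝ))
        (by norm_num : (0:ℝ) ≤ 1/2) (by norm_num : (0:ℝ) ≤ 1/2) (by norm_num)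
      simp only [smul_eq_mul] at hconc
      have heq : (1/2 : ℝ) * (((n:ℝ) - k - 1) * τ) + (1/2) * (((n:ℝ) - k + 1) * τ)
          = ((n:ℝ) - k) * τ := by ring
      rw [heq] at hconc
      linarith
    push_cast
    have : (((n:ℝ) - k + 1) * τ) ^ γ - (((n:ℝ) - k) * τ) ^ γ
        ≤ (((n:ℝ) - (k + 1) + 1) * τ) ^ γ - (((n:ℝ) - (k + 1)) * τ) ^ γ := by
      have e3 : ((n:ℝ) - (k + 1) + 1) = (n:ℝ) - k := by ring
      have e4 : ((n:ℝ) - (k + 1)) = (n:ℝ) - k - 1 := by ring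
      rw [e3, e4]; linarith
    exact mul_le_mul_of_nonneg_left this hC
  -- nonnegativity of b n 1
  have hb1 : 0 ≤ b n 1 := by
    rw [hbf 1 le_rfl hn1]
    apply mul_nonneg hC
    apply sub_nonneg.mpr
    have h1n : (1:ℝ) ≤ n := by exact_mod_cast hn1
    apply Real.rpow_le_rpow
    · push_cast; nlinarith
    · push_cast; nlinarith
    · exact hγ0.le
  -- inner product manipulation
  set c : ℕ → ℝ := fun k => ⟪φ k, φ n⟫ with hcdef
  have hS : ⟪∑ k ∈ Finset.Icc 1 n, b n k • (φ k - φ (k - 1)), φ n⟫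
      = ∑ k ∈ Finset.Icc 1 n, b n k * (c k - c (k - 1)) := by
    rw [sum_inner]
    refine Finset.sum_congr rfl fun k _ => ?_
    rw [real_inner_smul_left, inner_sub_left]
  rw [real_inner_smul_left, hS, abel_scalar (b n) c n hn1]
  have hcn : c n = ‖φ n‖ ^ 2 := real_inner_self_eq_norm_sq _
  have hc : ∀ k, c k ≤ (‖φ k‖ ^ 2 + ‖φ n‖ ^ 2) / 2 := by
    intro k
    have h1 := real_inner_le_norm (φ k) (φ n)
    nlinarith [sq_nonneg (‖φ k‖ - ‖φ n‖)]
  -- telescoping sum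
  have hTel : ∑ k ∈ Finset.Icc 1 (n - 1), (b n (k + 1) - b n k) = b n n - b n 1 := by
    have := abel_scalar (b n) (fun _ => 1) n hn1
    simp at this
    rw [Finset.sum_sub_distrib]
    linarith
  -- bound the cross sum
  have hA : ∑ k ∈ Finset.Icc 1 (n - 1), (b n (k + 1) - b n k) * c k
      ≤ (∑ k ∈ Finset.Icc 1 (n - 1), (b n (k + 1) - b n k) * ‖φ k‖ ^ 2) / 2
        + (b n n - b n 1) * ‖φ n‖ ^ 2 / 2 := by
    calc ∑ k ∈ Finset.Icc 1 (n - 1), (b n (k + 1) - b n k) * c k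
        ≤ ∑ k ∈ Finset.Icc 1 (n - 1),
            (b n (k + 1) - b n k) * ((‖φ k‖ ^ 2 + ‖φ n‖ ^ 2) / 2) := by
          refine Finset.sum_le_sum fun k hk => ?_
          have hk' := Finset.mem_Icc.mp hk
          have hd : 0 ≤ b n (k + 1) - b n k :=
            sub_nonneg.mpr (hmono k hk'.1 (by omega))
          exact mul_le_mul_of_nonneg_left (hc k) hd
      _ = (∑ k ∈ Finset.Icc 1 (n - 1), (b n (k + 1) - b n k) * ‖φ k‖ ^ 2) / 2
          + (∑ k ∈ Finset.Icc 1 (n - 1), (b n (k + 1) - b n k)) * ‖φ n‖ ^ 2 / 2 := by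
          have e : ∀ k ∈ Finset.Icc 1 (n - 1),
              (b n (k + 1) - b n k) * ((‖φ k‖ ^ 2 + ‖φ n‖ ^ 2) / 2)
                = (b n (k + 1) - b n k) * ‖φ k‖ ^ 2 / 2
                  + (b n (k + 1) - b n k) * ‖φ n‖ ^ 2 / 2 := fun k _ => by ring
          rw [Finset.sum_congr rfl e, Finset.sum_add_distrib, ← Finset.sum_div,
            ← Finset.sum_div, ← Finset.sum_mul]
      _ = _ := by rw [hTel]
  -- final combination
  set A := ∑ k ∈ Finset.Icc 1 (n - 1), (b n (k + 1) - b n k) * c k with hAdef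
  set B := ∑ k ∈ Finset.Icc 1 (n - 1), (b n (k + 1) - b n k) * ‖φ k‖ ^ 2 with hBdef
  have hXY : b n n * c n - b n 1 * c 0 - A
      ≥ (b n n * ‖φ n‖ ^ 2 - B - b n 1 * ‖φ 0‖ ^ 2) / 2 := by
    have h0 := hc 0
    have hb1c : b n 1 * c 0 ≤ b n 1 * ((‖φ 0‖ ^ 2 + ‖φ n‖ ^ 2) / 2) :=
      mul_le_mul_of_nonneg_left h0 hb1
    rw [hcn]
    linarith
  have h1τ : (0:ℝ) ≤ 1 / τ := by positivity
  have := mul_le_mul_of_nonneg_left hXY h1τ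
  have heq : (1:ℝ) / (2 * τ) * (b n n * ‖φ n‖ ^ 2 - B - b n 1 * ‖φ 0‖ ^ 2)
      = 1 / τ * ((b n n * ‖φ n‖ ^ 2 - B - b n 1 * ‖φ 0‖ ^ 2) / 2) := by
    field_simp
  rw [ge_iff_le, heq]
  exact this
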